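/- Let $(W,S)$ be an irreducible simply laced Coxeter group whose Coxeter graph has exactly one cycle with vertices $s_0,s_1,\dots,s_n$ as above, and let $x \in \mathbb{C}^\times$. On the vector space $\tilde{V}_x = \bigoplus_{s\in S}\mathbb{C}\alpha_s$, define for each $s \in S$: $s\cdot\alpha_s = -\alpha_s$; $s_0\cdot\alpha_{s_n} = \alpha_{s_n} + x\alpha_{s_0}$ and $s_n\cdot\alpha_{s_0} = \alpha_{s_0} + x^{-1}\alpha_{s_n}$; for all other pairs $s\ne t$, $s\cdot\alpha_t = \alpha_t$ if $m_{st}=2$ and $s\cdot\alpha_t = \alpha_t + \alpha_s$ if $m_{st}=3$. Then these formulas define a representation of $W$ on $\tilde{V}_x$, i.e., the linear maps satisfy the Coxeter relations $(\rho(s)\rho(t))^{m_{st}} = \mathrm{id}$ for all $s,t \in S$. -/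

import Mathlib

section Aux

variable {V : Type*} [AddCommGroup V] [Module ℂ V]

theorem cycleRep.key1_s (A : Module.End ℂ V) (es : V) (hAs : A es = -es) :
    (A * A) es = es := by
  simp [Module.End.mul_apply, hAs]

theorem cycleRep.key1_u (A : Module.End ℂ V) (es eu : V) (c : ℂ)
    (hAs : A es = -es) (hAu : A eu = eu + c • es) :
    (A * A) eu = eu := by
  simp [Module.End.mul_apply, hAu, hAs, smul_neg]

theorem cycleRep.key2_s (A B : Module.End ℂ V) (es : V)
    (hAs : A es = -es) (hBs : B es = es) :
    ((A * B) ^ 2) es = es := by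
  simp [pow_succ, Module.End.mul_apply, hAs, hBs, map_neg]

theorem cycleRep.key2_t (A B : Module.End ℂ V) (et : V)
    (hAt : A et = et) (hBt : B et = -et) :
    ((A * B) ^ 2) et = et := by
  simp [pow_succ, Module.End.mul_apply, hAt, hBt, map_neg]

theorem cycleRep.key2_u (A B : Module.End ℂ V) (es et eu : V) (c d : ℂ)
    (hAs : A es = -es) (hAt : A et = et) (hAu : A eu = eu + c • es)
    (hBt : B et = -et) (hBs : B es = es) (hBu : B eu = eu + d • et) :
    ((A * B) ^ 2) eu = eu := by
  simp only [pow_succ, pow_zero, one_mul, Module.End.mul_apply, hAs, hAt, hAu, hBs, hBt, hBu,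
    map_add, map_smul, map_neg, smul_neg]
  module

theorem cycleRep.key3_s (A B : Module.End ℂ V) (es et : V) (a : ℂ) (ha : a ≠ 0)
    (hAs : A es = -es) (hAt : A et = et + a • es)
    (hBt : B et = -et) (hBs : B es = es + a⁻¹ • et) :
    ((A * B) ^ 3) es = es := by
  simp only [pow_succ, pow_zero, one_mul, Module.End.mul_apply, hAs, hAt, hBs, hBt,
    map_add, map_smul, map_neg, smul_neg, smul_add, neg_neg]
  match_scalars <;> field_simp <;> ring

theorem cycleRep.key3_t (A B : Module.End ℂ V) (es et : V) (a : ℂ) (ha : a ≠ 0)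
    (hAs : A es = -es) (hAt : A et = et + a • es)
    (hBt : B et = -et) (hBs : B es = es + a⁻¹ • et) :
    ((A * B) ^ 3) et = et := by
  simp only [pow_succ, pow_zero, one_mul, Module.End.mul_apply, hAs, hAt, hBs, hBt,
    map_add, map_smul, map_neg, smul_neg, smul_add, neg_neg]
  match_scalars <;> field_simp <;> ring

theorem cycleRep.key3_u (A B : Module.End ℂ V) (es et eu : V) (a c d : ℂ) (ha : a ≠ 0)
    (hAs : A es = -es) (hAt : A et = et + a • es) (hAu : A eu = eu + c • es)
    (hBt : B et = -et) (hBs : B es = es + a⁻¹ • et) (hBu : B eu = eu + d • et) :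
    ((A * B) ^ 3) eu = eu := by
  simp only [pow_succ, pow_zero, one_mul, Module.End.mul_apply, hAs, hAt, hAu, hBs, hBt, hBu,
    map_add, map_smul, map_neg, smul_neg, smul_add, neg_neg]
  match_scalars <;> field_simp <;> ring

end Aux

open scoped Classical in
/-- The image of the basis vector `α_t` under the action of the generator `s` in the
representation `ρ̃_x` of the paper: `s·α_s = -α_s`; `s_0·α_{s_n} = α_{s_n} + x α_{s_0}`;
`s_n·α_{s_0} = α_{s_0} + x⁻¹ α_{s_n}`; for all other pairs `s ≠ t`, `s·α_t = α_t` if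
`m_{st} = 2` and `s·α_t = α_t + α_s` if `m_{st} = 3`. Here `s0 := s_0` and `sn := s_n`
are the two distinguished endpoints of the cycle. -/
noncomputable def cycleRepVec {B : Type*} (M : CoxeterMatrix B) (s0 sn : B) (x : ℂ)
    (s t : B) : B →₀ ℂ :=
  if t = s then -Finsupp.single s 1
  else if s = s0 ∧ t = sn then Finsupp.single t 1 + x • Finsupp.single s 1
  else if s = sn ∧ t = s0 then Finsupp.single t 1 + x⁻¹ • Finsupp.single s 1
  else if M.M s t = 3 then Finsupp.single t 1 + Finsupp.single s 1
  else Finsupp.single t 1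

/-- The linear endomorphism of `Ṽ_x = ⨁_{s ∈ S} ℂ α_s` by which the generator `s` acts. -/
noncomputable def cycleRepMap {B : Type*} (M : CoxeterMatrix B) (s0 sn : B) (x : ℂ)
    (s : B) : (B →₀ ℂ) →ₗ[ℂ] (B →₀ ℂ) :=
  Finsupp.lsum ℂ (fun t => LinearMap.toSpanSingleton ℂ (B →₀ ℂ) (cycleRepVec M s0 sn x s t))

open scoped Classical in
/-- The coefficient of `α_s` in `s · α_t` (for `t ≠ s`). -/
noncomputable def cycleRep.kap {B : Type*} (M : CoxeterMatrix B) (s0 sn : B) (x : ℂ)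
    (s t : B) : ℂ :=
  if s = s0 ∧ t = sn then x else if s = sn ∧ t = s0 then x⁻¹
  else if M.M s t = 3 then 1 else 0

theorem cycleRep.rep_single {B : Type*} (M : CoxeterMatrix B) (s0 sn : B) (x : ℂ) (s t : B) :
    cycleRepMap M s0 sn x s (Finsupp.single t 1) = cycleRepVec M s0 sn x s t := by
  simp [cycleRepMap]

theorem cycleRep.rep_self {B : Type*} (M : CoxeterMatrix B) (s0 sn : B) (x : ℂ) (s : B) :
    cycleRepMap M s0 sn x s (Finsupp.single s 1) = -Finsupp.single s 1 := by
  rw [cycleRep.rep_single]; simp [cycleRepVec]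

theorem cycleRep.rep_ne {B : Type*} (M : CoxeterMatrix B) (s0 sn : B) (x : ℂ) {s t : B}
    (h : t ≠ s) :
    cycleRepMap M s0 sn x s (Finsupp.single t 1)
      = Finsupp.single t 1 + cycleRep.kap M s0 sn x s t • Finsupp.single s 1 := by
  rw [cycleRep.rep_single]
  simp only [cycleRepVec, cycleRep.kap, if_neg h]
  split_ifs <;> simp

theorem cycleRep.endo_ext {B : Type*} {f g : (B →₀ ℂ) →ₗ[ℂ] (B →₀ ℂ)}
    (h : ∀ u, f (Finsupp.single u 1) = g (Finsupp.single u 1)) : f = g := by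
  apply Finsupp.lhom_ext
  intro u r
  rw [← Finsupp.smul_single_one, map_smul, map_smul, h]

/-- Let `(W,S)` be an irreducible simply laced Coxeter group whose Coxeter graph has exactly
one cycle, with cycle vertices `s_0, s_1, …, s_n` (`m_{s_i s_{i+1}} = 3`, `m_{s_0 s_n} = 3`),
and let `x ∈ ℂ^×`. Then the formulas above define a representation of `W` on
`Ṽ_x = ⨁_{s ∈ S} ℂ α_s`: the assigned linear maps satisfy the Coxeter relations
`(ρ(s)ρ(t))^{m_{st}} = id` for all `s,t ∈ S`. -/
theorem cycleRep_well_defined {B W : Type*} [Group W]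
    {M : CoxeterMatrix B} (cs : CoxeterSystem M W)
    (hsl : ∀ a b : B, a ≠ b → M.M a b = 2 ∨ M.M a b = 3)
    (G : SimpleGraph B) (hG : ∀ a b : B, G.Adj a b ↔ M.M a b = 3)
    (hconn : G.Connected)
    (c : ℕ → B) (n : ℕ) (hn : 2 ≤ n)
    (hinj : ∀ i j : ℕ, i ≤ n → j ≤ n → c i = c j → i = j)
    (hcyc : ∀ i : ℕ, i < n → M.M (c i) (c (i + 1)) = 3)
    (hcyc0 : M.M (c 0) (c n) = 3)
    (honly : ∀ (a : B) (p : G.Walk a a), p.IsCycle → ∀ e ∈ p.edges,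
      (∃ i : ℕ, i < n ∧ e = s(c i, c (i + 1))) ∨ e = s(c 0, c n))
    (x : ℂ) (hx : x ≠ 0) :
    ∀ s t : B,
      (cycleRepMap M (c 0) (c n) x s * cycleRepMap M (c 0) (c n) x t) ^ (M.M s t) = 1 := by
  have hc0n : c 0 ≠ c n := by
    intro h
    have := hinj 0 n (by omega) le_rfl h
    omega
  set ρ := cycleRepMap M (c 0) (c n) x with hρ
  set κ := cycleRep.kap M (c 0) (c n) x with hκ
  intro s t
  rcases eq_or_ne s t with rfl | hst
  · -- diagonal case: m = 1
    rw [M.diagonal s, pow_one]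
    apply cycleRep.endo_ext
    intro u
    rcases eq_or_ne u s with rfl | hus
    · rw [Module.End.one_apply]
      exact cycleRep.key1_s _ _ (cycleRep.rep_self M _ _ x _)
    · rw [Module.End.one_apply]
      exact cycleRep.key1_u _ _ _ (κ s u) (cycleRep.rep_self M _ _ x s)
        (cycleRep.rep_ne M _ _ x hus)
  · have hAs : ρ s (Finsupp.single s 1) = -Finsupp.single s 1 := cycleRep.rep_self M _ _ x s
    have hBt : ρ t (Finsupp.single t 1) = -Finsupp.single t 1 := cycleRep.rep_self M _ _ x t
    have hAt : ρ s (Finsupp.single t 1)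
        = Finsupp.single t 1 + κ s t • Finsupp.single s 1 :=
      cycleRep.rep_ne M _ _ x (Ne.symm hst)
    have hBs : ρ t (Finsupp.single s 1)
        = Finsupp.single s 1 + κ t s • Finsupp.single t 1 :=
      cycleRep.rep_ne M _ _ x hst
    rcases hsl s t hst with h2 | h3
    · -- m = 2 case
      have hk1 : κ s t = 0 := by
        have n1 : ¬(s = c 0 ∧ t = c n) := by rintro ⟨rfl, rfl⟩; omega
        have n2 : ¬(s = c n ∧ t = c 0) := by
          rintro ⟨rfl, rfl⟩; rw [M.symmetric] at h2; omega
        have n3 : ¬M.M s t = 3 := by omega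
        simp only [hκ, cycleRep.kap, if_neg n1, if_neg n2, if_neg n3]
      have hk2 : κ t s = 0 := by
        have n1 : ¬(t = c 0 ∧ s = c n) := by
          rintro ⟨rfl, rfl⟩; rw [M.symmetric] at h2; omega
        have n2 : ¬(t = c n ∧ s = c 0) := by rintro ⟨rfl, rfl⟩; omega
        have n3 : ¬M.M t s = 3 := by rw [M.symmetric t s]; omega
        simp only [hκ, cycleRep.kap, if_neg n1, if_neg n2, if_neg n3]
      rw [hk1, zero_smul, add_zero] at hAt
      rw [hk2, zero_smul, add_zero] at hBs
      rw [h2]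
      apply cycleRep.endo_ext
      intro u
      rw [Module.End.one_apply]
      rcases eq_or_ne u s with rfl | hus
      · exact cycleRep.key2_s _ _ _ hAs hBs
      rcases eq_or_ne u t with rfl | hut
      · exact cycleRep.key2_t _ _ _ hAt hBt
      · exact cycleRep.key2_u _ _ _ _ _ (κ s u) (κ t u) hAs hAt
          (cycleRep.rep_ne M _ _ x hus) hBt hBs (cycleRep.rep_ne M _ _ x hut)
    · -- m = 3 case
      have key : κ s t ≠ 0 ∧ κ t s = (κ s t)⁻¹ := by
        by_cases h1 : s = c 0 ∧ t = c n
        · obtain ⟨rfl, rfl⟩ := h1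
          have n1 : ¬(c n = c 0 ∧ c 0 = c n) := fun h => hc0n h.1.symm
          simp only [hκ, cycleRep.kap, if_pos (⟨rfl, rfl⟩ : c 0 = c 0 ∧ c n = c n),
            if_neg n1, if_pos (⟨rfl, rfl⟩ : c n = c n ∧ c 0 = c 0)]
          exact ⟨hx, rfl⟩
        · by_cases h2 : s = c n ∧ t = c 0
          · obtain ⟨rfl, rfl⟩ := h2
            have n1 : ¬(c n = c 0 ∧ c 0 = c n) := fun h => hc0n h.1.symm
            simp only [hκ, cycleRep.kap, if_neg n1,
              if_pos (⟨rfl, rfl⟩ : c n = c n ∧ c 0 = c 0),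
              if_pos (⟨rfl, rfl⟩ : c 0 = c 0 ∧ c n = c n)]
            exact ⟨inv_ne_zero hx, (inv_inv x).symm⟩
          · have n1 : ¬(t = c 0 ∧ s = c n) := fun h => h2 ⟨h.2, h.1⟩
            have n2 : ¬(t = c n ∧ s = c 0) := fun h => h1 ⟨h.2, h.1⟩
            have h3' : M.M t s = 3 := by rw [M.symmetric t s]; exact h3
            simp only [hκ, cycleRep.kap, if_neg h1, if_neg h2, if_neg n1, if_neg n2,
              if_pos h3, if_pos h3']
            norm_num
      obtain ⟨hk0, hkinv⟩ := key
      rw [hkinv] at hBs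
      rw [h3]
      apply cycleRep.endo_ext
      intro u
      rw [Module.End.one_apply]
      rcases eq_or_ne u s with rfl | hus
      · exact cycleRep.key3_s _ _ _ _ _ hk0 hAs hAt hBt hBs
      rcases eq_or_ne u t with rfl | hut
      · exact cycleRep.key3_t _ _ _ _ _ hk0 hAs hAt hBt hBs
      · exact cycleRep.key3_u _ _ _ _ _ _ (κ s u) (κ t u) hk0 hAs hAt
          (cycleRep.rep_ne M _ _ x hus) hBt hBs (cycleRep.rep_ne M _ _ x hut)
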